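/- The symmetric group cloning maps satisfy: for all n ≥ 1, all l < j ≤ n, and all σ ∈ Σ_n, c_{j+1}^{n+1}(c_l^n(σ)) = c_l^{n+1}(c_j^n(σ)). -/
import Mathlib


/-- The cloning map `c_j^n` on functions `Fin n → Fin n`: duplicate the `j`-th strand
(0-based version of the 1-based formula in the paper). -/
def cloneFun {n : ℕ} (f : Fin n → Fin n) (j : Fin n) (i : Fin (n+1)) : Fin (n+1) :=
  if h1 : (i : ℕ) ≤ (j : ℕ) then
    let k : Fin n := ⟨(i : ℕ), lt_of_le_of_lt h1 j.isLt⟩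
    if (f k : ℕ) ≤ (f j : ℕ) then ⟨(f k : ℕ), Nat.lt_succ_of_lt (f k).isLt⟩
    else ⟨(f k : ℕ) + 1, Nat.succ_lt_succ (f k).isLt⟩
  else
    let k : Fin n := ⟨(i : ℕ) - 1, by have := i.isLt; have := j.isLt; omega⟩
    if (f k : ℕ) < (f j : ℕ) then ⟨(f k : ℕ), Nat.lt_succ_of_lt (f k).isLt⟩
    else ⟨(f k : ℕ) + 1, Nat.succ_lt_succ (f k).isLt⟩

/-- The map `λ_n` on functions: extend by fixing the last element. -/
def lamFun {n : ℕ} (f : Fin n → Fin n) (i : Fin (n+1)) : Fin (n+1) :=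
  if h : (i : ℕ) < n then ⟨(f ⟨(i : ℕ), h⟩ : ℕ), Nat.lt_succ_of_lt (f ⟨(i : ℕ), h⟩).isLt⟩ else i

/-- The map `ρ_n` on functions: extend by fixing the first element. -/
def rhoFun {n : ℕ} (f : Fin n → Fin n) (i : Fin (n+1)) : Fin (n+1) :=
  if h : (i : ℕ) = 0 then ⟨0, Nat.succ_pos n⟩
  else
    let k : Fin n := ⟨(i : ℕ) - 1, by have := i.isLt; omega⟩
    ⟨(f k : ℕ) + 1, Nat.succ_lt_succ (f k).isLt⟩

/-- `c_{j+1}^{n+1}(c_l^n(σ)) = c_l^{n+1}(c_j^n(σ))` for `l < j`. -/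

private def cl (F : ℕ → ℕ) (j i : ℕ) : ℕ :=
  if i ≤ j then (if F i ≤ F j then F i else F i + 1)
  else (if F (i-1) < F j then F (i-1) else F (i-1) + 1)

private lemma cloneFun_val {n : ℕ} (f : Fin n → Fin n) (F : ℕ → ℕ)
    (hF : ∀ m (h : m < n), F m = (f ⟨m, h⟩ : Fin n).val) (j : Fin n) (i : Fin (n+1)) :
    ((cloneFun f j i : Fin (n+1)) : ℕ) = cl F (j : ℕ) (i : ℕ) := by
  rcases i with ⟨iv, hi⟩
  simp only [cloneFun, cl]
  by_cases h1 : iv ≤ (j : ℕ)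
  · have hiv : iv < n := lt_of_le_of_lt h1 j.isLt
    rw [dif_pos h1, if_pos h1, hF iv hiv, hF (j : ℕ) j.isLt]
    simp only [Fin.eta]
    split_ifs <;> rfl
  · have hiv : iv - 1 < n := by omega
    rw [dif_neg h1, if_neg h1, hF (iv-1) hiv, hF (j : ℕ) j.isLt]
    simp only [Fin.eta]
    split_ifs <;> rfl

set_option maxHeartbeats 4000000 in
private lemma cl_comm (F : ℕ → ℕ) (l j i : ℕ) (h : l < j) :
    cl (cl F l) (j+1) i = cl (cl F j) l i := by
  simp only [cl, Nat.add_sub_cancel]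
  split_ifs <;> omega

theorem stmt2 {n : ℕ} (σ : Equiv.Perm (Fin n)) (l j : Fin n) (h : (l : ℕ) < (j : ℕ)) :
    cloneFun (cloneFun ⇑σ l) ⟨(j : ℕ) + 1, by have := j.isLt; omega⟩ =
      cloneFun (cloneFun ⇑σ j) ⟨(l : ℕ), by have := l.isLt; omega⟩ := by
  have hn : 0 < n := lt_of_le_of_lt (Nat.zero_le _) j.isLt
  funext i
  apply Fin.ext
  set F : ℕ → ℕ := fun m => if h : m < n then ((σ : Fin n → Fin n) ⟨m, h⟩ : Fin n).val else 0 with hFdef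
  have hF : ∀ m (h : m < n), F m = ((σ : Fin n → Fin n) ⟨m, h⟩ : Fin n).val := by
    intro m h; simp [hFdef, h]
  have hL : ∀ m (h : m < n + 1), cl F (l : ℕ) m = ((cloneFun (⇑σ) l ⟨m, h⟩ : Fin (n+1)) : ℕ) := by
    intro m h; exact (cloneFun_val (⇑σ) F hF l ⟨m, h⟩).symm
  have hJ : ∀ m (h : m < n + 1), cl F (j : ℕ) m = ((cloneFun (⇑σ) j ⟨m, h⟩ : Fin (n+1)) : ℕ) := by
    intro m h; exact (cloneFun_val (⇑σ) F hF j ⟨m, h⟩).symm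
  rw [cloneFun_val (cloneFun (⇑σ) l) (cl F (l : ℕ)) (fun m h => hL m h) _ i,
      cloneFun_val (cloneFun (⇑σ) j) (cl F (j : ℕ)) (fun m h => hJ m h) _ i]
  exact cl_comm F (l : ℕ) (j : ℕ) (i : ℕ) h
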